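/- Let X1, X2 be independent Uniform(0,1) random variables, X = (X1,X2)^T, and α0 = (1/√2, 1/√2)^T. Then the conditional covariance matrix E[Cov(X | α0^T X)] equals the 2×2 matrix with entries 1/24 on the diagonal and -1/24 off the diagonal. -/

import Mathlib

open MeasureTheory ProbabilityTheory

theorem stmt0
    {Ω : Type*} [MeasurableSpace Ω] (μ : Measure Ω) [IsProbabilityMeasure μ]
    (X1 X2 : Ω → ℝ) (hX1 : Measurable X1) (hX2 : Measurable X2)
    (hu1 : μ.map X1 = volume.restrict (Set.Ioc (0:ℝ) 1))
    (hu2 : μ.map X2 = volume.restrict (Set.Ioc (0:ℝ) 1))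
    (hind : IndepFun X1 X2 μ)
    (S : Ω → ℝ) (hS : S = fun ω => (X1 ω + X2 ω) / Real.sqrt 2)
    (m : MeasurableSpace Ω) (hm : m = MeasurableSpace.comap S Real.measurableSpace)
    (X : Fin 2 → Ω → ℝ) (hX : X = ![X1, X2]) :
    (Matrix.of fun i j : Fin 2 =>
        ∫ ω, (X i ω - (μ[X i | m]) ω) * (X j ω - (μ[X j | m]) ω) ∂μ)
      = !![(1:ℝ)/24, -1/24; -1/24, 1/24] := by
  subst hX hm hS
  -- basic measurability
  have hS_meas : Measurable (fun ω => (X1 ω + X2 ω) / Real.sqrt 2) :=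
    (hX1.add hX2).div_const _
  have hm_le : MeasurableSpace.comap (fun ω => (X1 ω + X2 ω) / Real.sqrt 2)
      Real.measurableSpace ≤ ‹MeasurableSpace Ω› := hS_meas.comap_le
  haveI : SigmaFinite (μ.trim hm_le) := by
    haveI := isFiniteMeasure_trim hm_le (μ := μ)
    infer_instance
  -- a.e. bounds
  have hae : ∀ (Y : Ω → ℝ), Measurable Y → μ.map Y = volume.restrict (Set.Ioc (0:ℝ) 1) →
      ∀ᵐ ω ∂μ, Y ω ∈ Set.Ioc (0:ℝ) 1 := by
    intro Y hY hu
    have : μ (Y ⁻¹' (Set.Ioc (0:ℝ) 1)ᶜ) = 0 := by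
      rw [← Measure.map_apply hY measurableSet_Ioc.compl, hu,
        Measure.restrict_apply measurableSet_Ioc.compl]
      simp
    filter_upwards [measure_eq_zero_iff_ae_notMem.mp this] with ω hω
    simpa using hω
  have hae1 := hae X1 hX1 hu1
  have hae2 := hae X2 hX2 hu2
  have hb1 : ∀ᵐ ω ∂μ, ‖X1 ω‖ ≤ 1 := hae1.mono fun ω h => by
    rw [Real.norm_eq_abs, abs_le]; constructor <;> linarith [h.1, h.2]
  have hb2 : ∀ᵐ ω ∂μ, ‖X2 ω‖ ≤ 1 := hae2.mono fun ω h => by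
    rw [Real.norm_eq_abs, abs_le]; constructor <;> linarith [h.1, h.2]
  -- integrability
  have hint1 : Integrable X1 μ :=
    memLp_one_iff_integrable.mp (MemLp.of_bound hX1.aestronglyMeasurable 1 hb1)
  have hint2 : Integrable X2 μ :=
    memLp_one_iff_integrable.mp (MemLp.of_bound hX2.aestronglyMeasurable 1 hb2)
  have hsq1 : Integrable (fun ω => X1 ω * X1 ω) μ :=
    memLp_one_iff_integrable.mp (MemLp.of_bound ((hX1.mul hX1).aestronglyMeasurable) 1
      (hb1.mono fun ω h => by
        rw [Real.norm_eq_abs, abs_mul]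
        calc |X1 ω| * |X1 ω| ≤ 1 * 1 := by
              exact mul_le_mul (by simpa using h) (by simpa using h) (abs_nonneg _) zero_le_one
          _ = 1 := by ring))
  have hsq2 : Integrable (fun ω => X2 ω * X2 ω) μ :=
    memLp_one_iff_integrable.mp (MemLp.of_bound ((hX2.mul hX2).aestronglyMeasurable) 1
      (hb2.mono fun ω h => by
        rw [Real.norm_eq_abs, abs_mul]
        calc |X2 ω| * |X2 ω| ≤ 1 * 1 := by
              exact mul_le_mul (by simpa using h) (by simpa using h) (abs_nonneg _) zero_le_one
          _ = 1 := by ring))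
  have hmul : Integrable (fun ω => X1 ω * X2 ω) μ := hind.integrable_mul hint1 hint2
  -- moments
  have hmom : ∀ (Y : Ω → ℝ), Measurable Y → μ.map Y = volume.restrict (Set.Ioc (0:ℝ) 1) →
      (∫ ω, Y ω ∂μ = 1/2) ∧ (∫ ω, Y ω * Y ω ∂μ = 1/3) := by
    intro Y hY hu
    have h1 : ∫ ω, Y ω ∂μ = ∫ x in Set.Ioc (0:ℝ) 1, x := by
      rw [← hu]
      exact (integral_map (f := fun x => x) hY.aemeasurable
        measurable_id.aestronglyMeasurable).symm
    have h2 : ∫ ω, Y ω * Y ω ∂μ = ∫ x in Set.Ioc (0:ℝ) 1, x * x := by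
      rw [← hu]
      exact (integral_map (f := fun x => x * x) hY.aemeasurable
        (measurable_id.mul measurable_id).aestronglyMeasurable).symm
    constructor
    · rw [h1, ← intervalIntegral.integral_of_le zero_le_one, _root_.integral_id]
      norm_num
    · rw [h2, ← intervalIntegral.integral_of_le zero_le_one]
      simp_rw [← pow_two]
      rw [_root_.integral_pow]
      norm_num
  obtain ⟨hE1, hE11⟩ := hmom X1 hX1 hu1
  obtain ⟨hE2, hE22⟩ := hmom X2 hX2 hu2
  have hE12 : ∫ ω, X1 ω * X2 ω ∂μ = 1/4 := by
    have := IndepFun.integral_mul_eq_mul_integral hind hX1.aestronglyMeasurable hX2.aestronglyMeasurable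
    have h' : ∫ ω, X1 ω * X2 ω ∂μ = (∫ ω, X1 ω ∂μ) * ∫ ω, X2 ω ∂μ := this
    rw [h', hE1, hE2]; norm_num
  -- symmetry of the joint law
  have hmap : μ.map (fun ω => (X1 ω, X2 ω)) = μ.map (fun ω => (X2 ω, X1 ω)) := by
    rw [(indepFun_iff_map_prod_eq_prod_map_map hX1.aemeasurable hX2.aemeasurable).mp hind,
      (indepFun_iff_map_prod_eq_prod_map_map hX2.aemeasurable hX1.aemeasurable).mp hind.symm,
      hu1, hu2]
  -- the key exchangeability identity on comap-measurable sets
  have key : ∀ s : Set Ω, MeasurableSet[MeasurableSpace.comap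
        (fun ω => (X1 ω + X2 ω) / Real.sqrt 2) Real.measurableSpace] s →
      ∫ ω in s, X1 ω ∂μ = ∫ ω in s, X2 ω ∂μ := by
    rintro s ⟨B, hB, rfl⟩
    set g : ℝ × ℝ → ℝ := fun p => Set.indicator B (fun _ => (1:ℝ)) ((p.1 + p.2) / Real.sqrt 2) * p.1
      with hg
    have hg_meas : Measurable g :=
      ((measurable_const.indicator hB).comp ((measurable_fst.add measurable_snd).div_const _)).mul
        measurable_fst
    have e1 : ∫ ω in (fun ω => (X1 ω + X2 ω) / Real.sqrt 2) ⁻¹' B, X1 ω ∂μ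
        = ∫ p, g p ∂(μ.map (fun ω => (X1 ω, X2 ω))) := by
      rw [integral_map (hX1.prodMk hX2).aemeasurable hg_meas.aestronglyMeasurable,
        ← integral_indicator (hS_meas hB)]
      refine integral_congr_ae (Filter.Eventually.of_forall fun ω => ?_)
      by_cases h : (X1 ω + X2 ω) / Real.sqrt 2 ∈ B <;>
        simp [hg, Set.indicator_of_mem, Set.indicator_of_notMem, h, Set.mem_preimage]
    have e2 : ∫ ω in (fun ω => (X1 ω + X2 ω) / Real.sqrt 2) ⁻¹' B, X2 ω ∂μ
        = ∫ p, g p ∂(μ.map (fun ω => (X2 ω, X1 ω))) := by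
      rw [integral_map (hX2.prodMk hX1).aemeasurable hg_meas.aestronglyMeasurable,
        ← integral_indicator (hS_meas hB)]
      refine integral_congr_ae (Filter.Eventually.of_forall fun ω => ?_)
      by_cases h : (X1 ω + X2 ω) / Real.sqrt 2 ∈ B
      · have h' : (X2 ω + X1 ω) / Real.sqrt 2 ∈ B := by rwa [add_comm]
        simp [hg, Set.indicator_of_mem, h, h', Set.mem_preimage]
      · have h' : (X2 ω + X1 ω) / Real.sqrt 2 ∉ B := by rwa [add_comm]
        simp [hg, Set.indicator_of_notMem, h, h', Set.mem_preimage]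
    rw [e1, e2, hmap]
  -- the conditional expectations
  set f : Ω → ℝ := fun ω => (X1 ω + X2 ω) / 2 with hf
  have hf_int : Integrable f μ := (hint1.add hint2).div_const 2
  have hf_meas' : AEStronglyMeasurable[MeasurableSpace.comap
      (fun ω => (X1 ω + X2 ω) / Real.sqrt 2) Real.measurableSpace] f μ := by
    have h2 : Real.sqrt 2 ≠ 0 := by positivity
    have : f = (fun x : ℝ => x * (Real.sqrt 2 / 2)) ∘ fun ω => (X1 ω + X2 ω) / Real.sqrt 2 := by
      funext ω
      simp only [hf, Function.comp_apply]
      field_simp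
    rw [this]
    exact StronglyMeasurable.aestronglyMeasurable
      (((measurable_id.mul_const _).comp (comap_measurable _)).stronglyMeasurable)
  have hseteq : ∀ s : Set Ω, MeasurableSet[MeasurableSpace.comap
        (fun ω => (X1 ω + X2 ω) / Real.sqrt 2) Real.measurableSpace] s →
      (∫ ω in s, f ω ∂μ = ∫ ω in s, X1 ω ∂μ) ∧ (∫ ω in s, f ω ∂μ = ∫ ω in s, X2 ω ∂μ) := by
    intro s hs
    have h1 : ∫ ω in s, f ω ∂μ = ((∫ ω in s, X1 ω ∂μ) + ∫ ω in s, X2 ω ∂μ) / 2 := by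
      simp only [hf]
      rw [integral_div, integral_add hint1.integrableOn hint2.integrableOn]
    have h2 := key s hs
    constructor
    · rw [h1, ← h2]; ring
    · rw [h1, h2]; ring
  have hc1 : f =ᵐ[μ] μ[X1 | MeasurableSpace.comap
      (fun ω => (X1 ω + X2 ω) / Real.sqrt 2) Real.measurableSpace] :=
    ae_eq_condExp_of_forall_setIntegral_eq hm_le hint1
      (fun s _ _ => hf_int.integrableOn) (fun s hs _ => (hseteq s hs).1) hf_meas'
  have hc2 : f =ᵐ[μ] μ[X2 | MeasurableSpace.comap
      (fun ω => (X1 ω + X2 ω) / Real.sqrt 2) Real.measurableSpace] :=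
    ae_eq_condExp_of_forall_setIntegral_eq hm_le hint2
      (fun s _ _ => hf_int.integrableOn) (fun s hs _ => (hseteq s hs).2) hf_meas'
  -- compute the integrals
  have hD : Integrable (fun ω => ((X1 ω - X2 ω)/2) * ((X1 ω - X2 ω)/2)) μ := by
    have : (fun ω => ((X1 ω - X2 ω)/2) * ((X1 ω - X2 ω)/2))
        = fun ω => (X1 ω * X1 ω)/4 - (X1 ω * X2 ω)/2 + (X2 ω * X2 ω)/4 := by
      funext ω; ring
    rw [this]
    exact ((hsq1.div_const 4).sub (hmul.div_const 2)).add (hsq2.div_const 4)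
  have hDval : ∫ ω, ((X1 ω - X2 ω)/2) * ((X1 ω - X2 ω)/2) ∂μ = 1/24 := by
    have heq : (fun ω => ((X1 ω - X2 ω)/2) * ((X1 ω - X2 ω)/2))
        = fun ω => (X1 ω * X1 ω)/4 - (X1 ω * X2 ω)/2 + (X2 ω * X2 ω)/4 := by
      funext ω; ring
    have i1 : Integrable (fun ω => X1 ω * X1 ω / 4 - X1 ω * X2 ω / 2) μ :=
      (hsq1.div_const 4).sub (hmul.div_const 2)
    have i2 : Integrable (fun ω => X2 ω * X2 ω / 4) μ := hsq2.div_const 4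
    have i3 : Integrable (fun ω => X1 ω * X1 ω / 4) μ := hsq1.div_const 4
    have i4 : Integrable (fun ω => X1 ω * X2 ω / 2) μ := hmul.div_const 2
    rw [heq, integral_add i1 i2, integral_sub i3 i4, integral_div, integral_div,
      integral_div, hE11, hE22, hE12]
    norm_num
  -- identify each entry a.e.
  have entry : ∀ (Y Z : Ω → ℝ), (f =ᵐ[μ] μ[Y | MeasurableSpace.comap
        (fun ω => (X1 ω + X2 ω) / Real.sqrt 2) Real.measurableSpace]) →
      (f =ᵐ[μ] μ[Z | MeasurableSpace.comap
        (fun ω => (X1 ω + X2 ω) / Real.sqrt 2) Real.measurableSpace]) →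
      ∫ ω, (Y ω - (μ[Y | MeasurableSpace.comap
          (fun ω => (X1 ω + X2 ω) / Real.sqrt 2) Real.measurableSpace]) ω)
        * (Z ω - (μ[Z | MeasurableSpace.comap
          (fun ω => (X1 ω + X2 ω) / Real.sqrt 2) Real.measurableSpace]) ω) ∂μ
      = ∫ ω, (Y ω - f ω) * (Z ω - f ω) ∂μ := by
    intro Y Z hY hZ
    refine integral_congr_ae ?_
    filter_upwards [hY, hZ] with ω h1 h2
    rw [← h1, ← h2]
  have k11 := entry X1 X1 hc1 hc1
  have k12 := entry X1 X2 hc1 hc2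
  have k21 := entry X2 X1 hc2 hc1
  have k22 := entry X2 X2 hc2 hc2
  have pt1 : ∀ ω, X1 ω - f ω = (X1 ω - X2 ω)/2 := fun ω => by simp only [hf]; ring
  have pt2 : ∀ ω, X2 ω - f ω = -((X1 ω - X2 ω)/2) := fun ω => by simp only [hf]; ring
  have v11 : ∫ ω, (X1 ω - f ω) * (X1 ω - f ω) ∂μ = 1/24 := by
    simp_rw [pt1]; exact hDval
  have v22 : ∫ ω, (X2 ω - f ω) * (X2 ω - f ω) ∂μ = 1/24 := by
    simp_rw [pt2, neg_mul_neg]; exact hDval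
  have v12 : ∫ ω, (X1 ω - f ω) * (X2 ω - f ω) ∂μ = -(1/24) := by
    simp_rw [pt1, pt2, mul_neg]
    rw [integral_neg, hDval]
  have v21 : ∫ ω, (X2 ω - f ω) * (X1 ω - f ω) ∂μ = -(1/24) := by
    simp_rw [pt1, pt2, neg_mul]
    rw [integral_neg, hDval]
  ext i j
  fin_cases i <;> fin_cases j <;>
    simp only [Matrix.of_apply, Fin.mk_zero, Fin.mk_one, Fin.isValue, Matrix.cons_val_zero,
      Matrix.cons_val_one, Matrix.head_cons, Matrix.cons_val', Matrix.empty_val',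
      Matrix.cons_val_fin_one, Matrix.head_fin_const]
  · rw [k11, v11]
  · rw [k12, v12]; norm_num
  · rw [k21, v21]; norm_num
  · rw [k22, v22]
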